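/- arXiv:2012.07368 — 3 statements merged into one kernel-verified Lean document; each statement's English description precedes it below -/
import Mathlib

section
/- Let A and B be n×n real symmetric positive semidefinite matrices. Then A and B are simultaneously diagonalizable by congruence: there exists a nonsingular matrix D ∈ ℝ^{n×n} such that both DᵀAD and DᵀBD are diagonal. -/
open Matrix

private lemma psd_apply_eq_zero {m : Type*} [Fintype m] [DecidableEq m]
    {M : Matrix m m ℝ} (hM : M.PosSemidef) {i : m} (h : M i i = 0) (j : m) :
    M j i = 0 := by
  have h0 : star (Pi.single i (1:ℝ)) ⬝ᵥ M *ᵥ Pi.single i 1 = 0 := by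
    simpa [mulVec_single, dotProduct_single] using h
  have := (hM.dotProduct_mulVec_zero_iff (Pi.single i 1)).mp h0
  have := congrFun this j
  simpa [mulVec_single] using this

private lemma psd_diag_nonneg {m : Type*} [Fintype m] [DecidableEq m]
    {M : Matrix m m ℝ} (hM : M.PosSemidef) (i : m) : 0 ≤ M i i := by
  have := hM.dotProduct_mulVec_nonneg (Pi.single i 1)
  simpa [mulVec_single, dotProduct_single] using this

theorem stmt2 {n : ℕ} (A B : Matrix (Fin n) (Fin n) ℝ)
    (hA : A.PosSemidef) (hB : B.PosSemidef) :
    ∃ D : Matrix (Fin n) (Fin n) ℝ, IsUnit D ∧ (Dᵀ * A * D).IsDiag ∧ (Dᵀ * B * D).IsDiag := by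
  classical
  have hS : (A + B).PosSemidef := hA.add hB
  set μ : Fin n → ℝ := hS.1.eigenvalues with hμdef
  have hμ : ∀ i, 0 ≤ μ i := hS.eigenvalues_nonneg
  set U : Matrix (Fin n) (Fin n) ℝ := (hS.1.eigenvectorUnitary : Matrix (Fin n) (Fin n) ℝ) with hUdef
  have hUU : star U * U = 1 := mem_unitaryGroup_iff'.mp hS.1.eigenvectorUnitary.2
  have hUU' : U * star U = 1 := mem_unitaryGroup_iff.mp hS.1.eigenvectorUnitary.2
  set f : Fin n → ℝ := fun i => if μ i = 0 then 1 else Real.sqrt (μ i)⁻¹ with hfdef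
  have hf : ∀ i, f i ≠ 0 := by
    intro i
    simp only [hfdef]
    split
    · exact one_ne_zero
    · next h =>
      exact ne_of_gt (Real.sqrt_pos.mpr (inv_pos.mpr (lt_of_le_of_ne (hμ i) (Ne.symm h))))
  set e : Fin n → ℝ := fun i => if μ i = 0 then 0 else 1 with hedef
  set D₁ : Matrix (Fin n) (Fin n) ℝ := U * diagonal f with hD₁def
  have hstarU : star U = Uᵀ := by
    rw [Matrix.star_eq_conjTranspose, conjTranspose_eq_transpose_of_trivial]
  have hspec : Uᵀ * (A + B) * U = diagonal μ := by
    rw [← hstarU]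
    have := hS.1.conjStarAlgAut_star_eigenvectorUnitary
    rw [Unitary.conjStarAlgAut_apply, Unitary.coe_star, star_star] at this
    simpa using this
  have hD₁S : D₁ᵀ * (A + B) * D₁ = diagonal e := by
    rw [hD₁def, transpose_mul, diagonal_transpose]
    calc diagonal f * Uᵀ * (A + B) * (U * diagonal f)
        = diagonal f * (Uᵀ * (A + B) * U) * diagonal f := by
          simp only [Matrix.mul_assoc]
      _ = diagonal f * diagonal μ * diagonal f := by rw [hspec]
      _ = diagonal (fun i => f i * μ i * f i) := by
          rw [diagonal_mul_diagonal, diagonal_mul_diagonal]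
      _ = diagonal e := by
          have hfe : (fun i => f i * μ i * f i) = e := by
            funext i
            simp only [hfdef, hedef]
            split
            · next h => simp [h]
            · next h =>
              have h1 : (0:ℝ) ≤ (μ i)⁻¹ := inv_nonneg.mpr (hμ i)
              rw [mul_comm, ← mul_assoc, Real.mul_self_sqrt h1, inv_mul_cancel₀ h]
          rw [hfe]
  set A' : Matrix (Fin n) (Fin n) ℝ := D₁ᵀ * A * D₁ with hA'def
  set B' : Matrix (Fin n) (Fin n) ℝ := D₁ᵀ * B * D₁ with hB'def
  have hA' : A'.PosSemidef := by
    have := hA.conjTranspose_mul_mul_same D₁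
    rwa [conjTranspose_eq_transpose_of_trivial] at this
  have hB' : B'.PosSemidef := by
    have := hB.conjTranspose_mul_mul_same D₁
    rwa [conjTranspose_eq_transpose_of_trivial] at this
  have hsum : A' + B' = diagonal e := by
    rw [hA'def, hB'def, ← hD₁S]
    simp only [Matrix.mul_add, Matrix.add_mul]
  -- off-support vanishing
  have hA'zero : ∀ i, μ i = 0 → ∀ j, A' j i = 0 ∧ A' i j = 0 := by
    intro i hi
    have hdiag : A' i i + B' i i = 0 := by
      have := congrFun (congrFun hsum i) i
      simpa [hedef, hi] using this
    have hAii : A' i i = 0 :=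
      le_antisymm (by linarith [psd_diag_nonneg hB' i]) (psd_diag_nonneg hA' i)
    intro j
    refine ⟨psd_apply_eq_zero hA' hAii j, ?_⟩
    have := hA'.1
    have h2 := congrFun (congrFun this j) i
    simp only [conjTranspose_apply, star_trivial] at h2
    rw [h2]
    exact psd_apply_eq_zero hA' hAii j
  -- block structure
  set p : Fin n → Prop := fun i => μ i ≠ 0 with hpdef
  set eqv : {i // p i} ⊕ {i // ¬ p i} ≃ Fin n := Equiv.sumCompl p with heqv
  set A₁ : Matrix {i // p i} {i // p i} ℝ :=
    A'.submatrix Subtype.val Subtype.val with hA₁def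
  have hA₁ : A₁.PosSemidef := hA'.submatrix _
  set ν : {i // p i} → ℝ := hA₁.1.eigenvalues with hνdef
  set Q₁ : Matrix {i // p i} {i // p i} ℝ :=
    (hA₁.1.eigenvectorUnitary : Matrix {i // p i} {i // p i} ℝ) with hQ₁def
  have hQ₁Q₁ : Q₁ᵀ * Q₁ = 1 := by
    have := mem_unitaryGroup_iff'.mp hA₁.1.eigenvectorUnitary.2
    rwa [Matrix.star_eq_conjTranspose, conjTranspose_eq_transpose_of_trivial] at this
  have hQ₁Q₁' : Q₁ * Q₁ᵀ = 1 := by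
    have := mem_unitaryGroup_iff.mp hA₁.1.eigenvectorUnitary.2
    rwa [Matrix.star_eq_conjTranspose, conjTranspose_eq_transpose_of_trivial] at this
  have hQ₁spec : Q₁ᵀ * A₁ * Q₁ = diagonal ν := by
    have := hA₁.1.conjStarAlgAut_star_eigenvectorUnitary
    rw [Unitary.conjStarAlgAut_apply, Unitary.coe_star, star_star] at this
    rw [Matrix.star_eq_conjTranspose, conjTranspose_eq_transpose_of_trivial] at this
    simpa using this
  set Q : Matrix (Fin n) (Fin n) ℝ :=
    (fromBlocks Q₁ 0 0 (1 : Matrix {i // ¬ p i} {i // ¬ p i} ℝ)).submatrix eqv.symm eqv.symm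
    with hQdef
  have hQT : Qᵀ = (fromBlocks Q₁ᵀ 0 0 (1 : Matrix {i // ¬ p i} {i // ¬ p i} ℝ)).submatrix
      eqv.symm eqv.symm := by
    rw [hQdef, transpose_submatrix, fromBlocks_transpose]
    simp
  have hQQ : Q * Qᵀ = 1 := by
    rw [hQdef, hQT, submatrix_mul_equiv, fromBlocks_multiply]
    simp only [Matrix.mul_zero, Matrix.zero_mul, Matrix.mul_one, Matrix.one_mul,
      add_zero, zero_add, hQ₁Q₁']
    rw [fromBlocks_one, submatrix_one_equiv]
  -- A' as blocks
  have hvalinl : ∀ a : {i // p i}, eqv (Sum.inl a) = a.val := fun a => rfl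
  have hvalinr : ∀ b : {i // ¬ p i}, eqv (Sum.inr b) = b.val := fun b => rfl
  have hA'blocks : A' = (fromBlocks A₁ 0 0 0).submatrix eqv.symm eqv.symm := by
    ext i j
    rw [submatrix_apply]
    rcases h1 : eqv.symm i with a | b <;> rcases h2 : eqv.symm j with c | d
    · have hi : i = a.val := by rw [← hvalinl a, ← h1, Equiv.apply_symm_apply]
      have hj : j = c.val := by rw [← hvalinl c, ← h2, Equiv.apply_symm_apply]
      simp [hA₁def, hi, hj, fromBlocks_apply₁₁]
    · have hj : j = d.val := by rw [← hvalinr d, ← h2, Equiv.apply_symm_apply]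
      have hd : μ j = 0 := by
        have := d.2; simp only [hpdef, not_not] at this; rw [hj]; exact this
      simp [fromBlocks_apply₁₂, (hA'zero j hd i).1]
    · have hi : i = b.val := by rw [← hvalinr b, ← h1, Equiv.apply_symm_apply]
      have hb : μ i = 0 := by
        have := b.2; simp only [hpdef, not_not] at this; rw [hi]; exact this
      have := hA'zero i hb j
      simp [fromBlocks_apply₂₁, (hA'zero i hb j).2]
    · have hi : i = b.val := by rw [← hvalinr b, ← h1, Equiv.apply_symm_apply]
      have hb : μ i = 0 := by
        have := b.2; simp only [hpdef, not_not] at this; rw [hi]; exact this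
      simp [fromBlocks_apply₂₂, (hA'zero i hb j).2]
  have hEblocks : diagonal e = (fromBlocks (1 : Matrix {i // p i} {i // p i} ℝ) 0 0 0).submatrix
      eqv.symm eqv.symm := by
    ext i j
    rw [submatrix_apply]
    rcases h1 : eqv.symm i with a | b <;> rcases h2 : eqv.symm j with c | d
    · have hi : i = a.val := by rw [← hvalinl a, ← h1, Equiv.apply_symm_apply]
      have hj : j = c.val := by rw [← hvalinl c, ← h2, Equiv.apply_symm_apply]
      by_cases hac : a = c
      · subst hac
        have : i = j := by rw [hi, hj]
        subst this
        have hpi : μ i ≠ 0 := by rw [hi]; exact a.2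
        simp [hedef, hpi, fromBlocks_apply₁₁]
      · have hij : i ≠ j := by
          intro h
          apply hac
          apply Subtype.ext
          rw [← hi, ← hj, h]
        simp [diagonal_apply_ne _ hij, fromBlocks_apply₁₁, Matrix.one_apply_ne hac]
    · have hj : j = d.val := by rw [← hvalinr d, ← h2, Equiv.apply_symm_apply]
      have hij : i ≠ j := by
        intro h
        rw [h, h2] at h1
        exact Sum.inr_ne_inl h1
      simp [diagonal_apply_ne _ hij, fromBlocks_apply₁₂]
    · have hi : i = b.val := by rw [← hvalinr b, ← h1, Equiv.apply_symm_apply]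
      have hij : i ≠ j := by
        intro h
        rw [h, h2] at h1
        exact Sum.inl_ne_inr h1
      simp [diagonal_apply_ne _ hij, fromBlocks_apply₂₁]
    · have hi : i = b.val := by rw [← hvalinr b, ← h1, Equiv.apply_symm_apply]
      have hb : μ i = 0 := by
        have := b.2; simp only [hpdef, not_not] at this; rw [hi]; exact this
      by_cases hij : i = j
      · subst hij
        simp [hedef, hb, fromBlocks_apply₂₂]
      · simp [diagonal_apply_ne _ hij, fromBlocks_apply₂₂]
  have hQAQ : Qᵀ * A' * Q = (fromBlocks (diagonal ν) 0 0 0).submatrix eqv.symm eqv.symm := by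
    rw [hQT, hA'blocks, hQdef, submatrix_mul_equiv, submatrix_mul_equiv,
      fromBlocks_multiply, fromBlocks_multiply]
    rw [← hQ₁spec]
    congr 1 <;> simp [Matrix.mul_assoc]
  have hQEQ : Qᵀ * diagonal e * Q = diagonal e := by
    rw [hQT, hEblocks, hQdef, submatrix_mul_equiv, submatrix_mul_equiv,
      fromBlocks_multiply, fromBlocks_multiply]
    congr 1 <;> simp [hQ₁Q₁]
  have hdiagA : (Qᵀ * A' * Q).IsDiag := by
    rw [hQAQ]
    exact (Matrix.isDiag_fromBlocks_iff.mpr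
      ⟨isDiag_diagonal ν, rfl, rfl, Matrix.isDiag_zero⟩).submatrix eqv.symm.injective
  have hdiagB : (Qᵀ * B' * Q).IsDiag := by
    have hB'eq : B' = diagonal e - A' := by rw [← hsum]; abel
    have : Qᵀ * B' * Q = Qᵀ * diagonal e * Q - Qᵀ * A' * Q := by
      rw [hB'eq]
      simp only [Matrix.mul_sub, Matrix.sub_mul]
    rw [this, hQEQ]
    exact (isDiag_diagonal e).sub hdiagA
  refine ⟨D₁ * Q, ?_, ?_, ?_⟩
  · apply IsUnit.mul
    · apply IsUnit.mul
      · rw [Matrix.isUnit_iff_isUnit_det]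
        have : U.det * (star U).det = 1 := by rw [← det_mul, hUU', det_one]
        exact IsUnit.of_mul_eq_one _ this
      · rw [Matrix.isUnit_iff_isUnit_det, det_diagonal]
        exact (Finset.prod_ne_zero_iff.mpr fun i _ => hf i).isUnit
    · rw [Matrix.isUnit_iff_isUnit_det]
      have : Q.det * Qᵀ.det = 1 := by rw [← det_mul, hQQ, det_one]
      exact IsUnit.of_mul_eq_one _ this
  · have : (D₁ * Q)ᵀ * A * (D₁ * Q) = Qᵀ * A' * Q := by
      rw [transpose_mul, hA'def]
      simp only [Matrix.mul_assoc]
    rw [this]; exact hdiagA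
  · have : (D₁ * Q)ᵀ * B * (D₁ * Q) = Qᵀ * B' * Q := by
      rw [transpose_mul, hB'def]
      simp only [Matrix.mul_assoc]
    rw [this]; exact hdiagB
end

section
/- Under the same setting, if additionally t̄ᵢ ≤ (lᵢ + uᵢ)z̄ᵢ - lᵢuᵢ and lᵢ ≤ z̄ᵢ ≤ uᵢ for all i = 1,…,r, then g(z̄) ≤ (r + ρ₁s)/4 · max_{i=1,…,r} (uᵢ - lᵢ)². -/
theorem stmt12 {m r s : ℕ} (hr : r ≤ m) (hs : s ≤ r) (hr0 : 0 < r)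
    (ψ : (Fin m → ℝ) → ℝ) (θ : Fin r → ℝ) (δ : Fin s → ℝ)
    (hθ : ∀ i, 0 < θ i ∧ θ i ≤ 1) (hδ : ∀ i, 0 < δ i ∧ δ i ≤ 1)
    (ρ₁ : ℝ) (hρ : 0 < ρ₁) (zbar : Fin m → ℝ) (tbar : Fin r → ℝ)
    (l u : Fin r → ℝ)
    (hrel : ψ zbar - ∑ i : Fin r, θ i * tbar i
        - ρ₁ * ∑ i : Fin s, δ i * tbar (Fin.castLE hs i) ≤ 0)
    (hsq : ∀ i : Fin r, zbar (Fin.castLE hr i) ^ 2 ≤ tbar i)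
    (hbox : ∀ i : Fin r, l i ≤ zbar (Fin.castLE hr i) ∧ zbar (Fin.castLE hr i) ≤ u i)
    (hsec : ∀ i : Fin r, tbar i ≤ (l i + u i) * zbar (Fin.castLE hr i) - l i * u i) :
    ψ zbar - ∑ i : Fin r, θ i * zbar (Fin.castLE hr i) ^ 2
        - ρ₁ * ∑ i : Fin s, δ i * zbar (Fin.castLE (hs.trans hr) i) ^ 2
      ≤ ((r : ℝ) + ρ₁ * s) / 4 *
        Finset.univ.sup' (Finset.univ_nonempty_iff.mpr (Fin.pos_iff_nonempty.mp hr0))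
          (fun i : Fin r => (u i - l i) ^ 2) := by
  set M := Finset.univ.sup' (Finset.univ_nonempty_iff.mpr (Fin.pos_iff_nonempty.mp hr0))
      (fun i : Fin r => (u i - l i) ^ 2) with hMdef
  have hMle : ∀ i : Fin r, tbar i - zbar (Fin.castLE hr i) ^ 2 ≤ M / 4 := by
    intro i
    have h1 := (hbox i).1
    have h2 := (hbox i).2
    have h3 := hsec i
    have h4 : tbar i - zbar (Fin.castLE hr i) ^ 2 ≤ (u i - l i) ^ 2 / 4 := by
      nlinarith [sq_nonneg (zbar (Fin.castLE hr i) - (l i + u i) / 2)]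
    have h5 : (u i - l i) ^ 2 ≤ M :=
      Finset.le_sup' (fun i : Fin r => (u i - l i) ^ 2) (Finset.mem_univ i)
    linarith
  have hterm1 : ∀ i : Fin r, θ i * (tbar i - zbar (Fin.castLE hr i) ^ 2) ≤ M / 4 := by
    intro i
    have h0 := hsq i
    have h1 := (hθ i).1
    have h2 := (hθ i).2
    have h3 := hMle i
    nlinarith
  have hterm2 : ∀ i : Fin s,
      δ i * (tbar (Fin.castLE hs i) - zbar (Fin.castLE (hs.trans hr) i) ^ 2) ≤ M / 4 := by
    intro i
    have h0 := hsq (Fin.castLE hs i)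
    have h1 := (hδ i).1
    have h2 := (hδ i).2
    have h3 := hMle (Fin.castLE hs i)
    have he : Fin.castLE hr (Fin.castLE hs i) = Fin.castLE (hs.trans hr) i := rfl
    rw [he] at h0 h3
    nlinarith
  have hsum1 : ∑ i : Fin r, θ i * (tbar i - zbar (Fin.castLE hr i) ^ 2) ≤ r * (M / 4) := by
    calc ∑ i : Fin r, θ i * (tbar i - zbar (Fin.castLE hr i) ^ 2)
        ≤ ∑ _i : Fin r, M / 4 := Finset.sum_le_sum fun i _ => hterm1 i
      _ = r * (M / 4) := by simp [Finset.sum_const, mul_comm]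
  have hsum2 : ∑ i : Fin s,
      δ i * (tbar (Fin.castLE hs i) - zbar (Fin.castLE (hs.trans hr) i) ^ 2) ≤ s * (M / 4) := by
    calc ∑ i : Fin s, δ i * (tbar (Fin.castLE hs i) - zbar (Fin.castLE (hs.trans hr) i) ^ 2)
        ≤ ∑ _i : Fin s, M / 4 := Finset.sum_le_sum fun i _ => hterm2 i
      _ = s * (M / 4) := by simp [Finset.sum_const, mul_comm]
  have e1 : ∑ i : Fin r, θ i * (tbar i - zbar (Fin.castLE hr i) ^ 2)
      = ∑ i : Fin r, θ i * tbar i - ∑ i : Fin r, θ i * zbar (Fin.castLE hr i) ^ 2 := by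
    rw [← Finset.sum_sub_distrib]; simp [mul_sub]
  have e2 : ∑ i : Fin s, δ i * (tbar (Fin.castLE hs i) - zbar (Fin.castLE (hs.trans hr) i) ^ 2)
      = ∑ i : Fin s, δ i * tbar (Fin.castLE hs i)
        - ∑ i : Fin s, δ i * zbar (Fin.castLE (hs.trans hr) i) ^ 2 := by
    rw [← Finset.sum_sub_distrib]; simp [mul_sub]
  have h6 : ρ₁ * (∑ i : Fin s, δ i * tbar (Fin.castLE hs i)
        - ∑ i : Fin s, δ i * zbar (Fin.castLE (hs.trans hr) i) ^ 2) ≤ ρ₁ * (s * (M / 4)) := by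
    apply mul_le_mul_of_nonneg_left _ hρ.le
    rw [← e2]; exact hsum2
  rw [e1] at hsum1
  nlinarith [hsum1, h6, hrel]
end

section
/- Let g: ℝ^m → ℝ be differentiable and convex, Z ⊆ ℝ^m convex with nonempty interior characterized by box constraints -x₀ ≤ Dz ≤ 0 for a nonsingular D. Suppose z̄ ∈ Z minimizes g over Z with g(z̄) = 0, and the gradients of the active box constraints together with ∇g(z̄) are linearly independent. Then there is a contradiction; equivalently, if the linear independence constraint qualification holds at z̄ for the system {g ≤ 0, -x₀ ≤ Dz ≤ 0}, then {z ∈ Z : g(z) < 0} is nonempty. -/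
open Matrix

theorem stmt19 {m : ℕ} (g : (Fin m → ℝ) → ℝ) (hgdiff : Differentiable ℝ g)
    (hgconv : ConvexOn ℝ Set.univ g)
    (D : Matrix (Fin m) (Fin m) ℝ) (hD : IsUnit D) (x₀ : Fin m → ℝ)
    (Z : Set (Fin m → ℝ))
    (hZ : Z = {z | ∀ i, -x₀ i ≤ (D *ᵥ z) i ∧ (D *ᵥ z) i ≤ 0})
    (zbar : Fin m → ℝ) (hzbar : zbar ∈ Z) (hg0 : g zbar = 0)
    (hmin : ∀ z ∈ Z, g zbar ≤ g z)
    (w : Fin m → ℝ) (hw : ∀ v, fderiv ℝ g zbar v = w ⬝ᵥ v)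
    (hLI : LinearIndependent ℝ
      (fun o : Option {i : Fin m // (D *ᵥ zbar) i = 0 ∨ (D *ᵥ zbar) i = -x₀ i} =>
        o.elim w (fun i => fun j => D i.1 j))) :
    False := by
  classical
  subst hZ
  have hDdet : IsUnit D.det := (Matrix.isUnit_iff_isUnit_det D).mp hD
  set active : Fin m → Prop := fun i => (D *ᵥ zbar) i = 0 ∨ (D *ᵥ zbar) i = -x₀ i with hactive
  -- directional optimality
  have hdir : ∀ d : Fin m → ℝ,
      (∃ ε > (0:ℝ), ∀ t : ℝ, 0 < t → t < ε →
        (zbar + t • d) ∈ {z | ∀ i, -x₀ i ≤ (D *ᵥ z) i ∧ (D *ᵥ z) i ≤ 0}) →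
      0 ≤ w ⬝ᵥ d := by
    rintro d ⟨ε, hε, hfeas⟩
    have hline : HasDerivAt (fun t : ℝ => zbar + t • d) d 0 := by
      simpa using ((hasDerivAt_id (0:ℝ)).smul_const d).const_add zbar
    have hphi : HasDerivAt (fun t : ℝ => g (zbar + t • d)) (w ⬝ᵥ d) 0 := by
      have hFg : HasFDerivAt g (fderiv ℝ g zbar) (zbar + (0:ℝ) • d) := by
        simpa using (hgdiff zbar).hasFDerivAt
      have h := hFg.comp_hasDerivAt 0 hline
      rw [hw] at h
      exact h
    have hslope := hasDerivAt_iff_tendsto_slope.mp hphi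
    have hslope' : Filter.Tendsto (slope (fun t : ℝ => g (zbar + t • d)) 0)
        (nhdsWithin 0 (Set.Ioi 0)) (nhds (w ⬝ᵥ d)) :=
      hslope.mono_left (nhdsWithin_mono 0 (fun t ht => ne_of_gt ht))
    refine ge_of_tendsto hslope' ?_
    filter_upwards [Ioo_mem_nhdsGT_of_mem (Set.left_mem_Ico.2 hε)] with t ht
    have hz := hfeas t ht.1 ht.2
    have hgz : (0:ℝ) ≤ g (zbar + t • d) := by rw [← hg0]; exact hmin _ hz
    have hs : slope (fun t : ℝ => g (zbar + t • d)) 0 t = g (zbar + t • d) / t := by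
      simp [slope_def_field, hg0]
    rw [hs]
    exact div_nonneg hgz ht.1.le
  -- coefficients
  set c : Fin m → ℝ := w ᵥ* D⁻¹ with hc
  have hcD : c ᵥ* D = w := by
    rw [hc, Matrix.vecMul_vecMul, Matrix.nonsing_inv_mul D hDdet, Matrix.vecMul_one]
  -- for inactive j, c j = 0
  have hczero : ∀ j : Fin m, ¬ active j → c j = 0 := by
    intro j hja
    simp only [hactive, not_or] at hja
    obtain ⟨hj1, hj2⟩ := hja
    have hzb := hzbar j
    have hj1' : (D *ᵥ zbar) j < 0 := lt_of_le_of_ne hzb.2 hj1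
    have hj2' : -x₀ j < (D *ᵥ zbar) j := lt_of_le_of_ne (hzb.1) (Ne.symm hj2)
    have hDd : ∀ s : ℝ, D *ᵥ (D⁻¹ *ᵥ (s • (Pi.single j 1 : Fin m → ℝ))) = s • (Pi.single j 1 : Fin m → ℝ) := by
      intro s
      rw [Matrix.mulVec_mulVec, Matrix.mul_nonsing_inv D hDdet, Matrix.one_mulVec]
    have key : ∀ s : ℝ, (∀ t : ℝ, 0 < t → (D *ᵥ zbar) j + t * s ≤ 0 ∧
        -x₀ j ≤ (D *ᵥ zbar) j + t * s → True) → True := fun _ _ => trivial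
    have feas : ∀ s : ℝ, (0 < -(D *ᵥ zbar) j ∨ s ≤ 0) → (0 < (D *ᵥ zbar) j + x₀ j ∨ 0 ≤ s) →
        True := fun _ _ _ => trivial
    -- w ⬝ᵥ (D⁻¹ *ᵥ (s • single j 1)) = s * c j
    have hdot : ∀ s : ℝ, w ⬝ᵥ (D⁻¹ *ᵥ (s • (Pi.single j 1 : Fin m → ℝ))) = s * c j := by
      intro s
      rw [Matrix.dotProduct_mulVec]
      simp [dotProduct, Pi.single_apply, mul_comm]
      left; rfl
    have hfeas : ∀ s : ℝ, s ≠ 0 → ∃ ε > (0:ℝ), ∀ t : ℝ, 0 < t → t < ε →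
        (zbar + t • (D⁻¹ *ᵥ (s • (Pi.single j 1 : Fin m → ℝ)))) ∈
          {z | ∀ i, -x₀ i ≤ (D *ᵥ z) i ∧ (D *ᵥ z) i ≤ 0} := by
      intro s hs
      refine ⟨min (-(D *ᵥ zbar) j / |s|) (((D *ᵥ zbar) j + x₀ j) / |s|), ?_, ?_⟩
      · have habs : 0 < |s| := abs_pos.2 hs
        exact lt_min (div_pos (by linarith) habs) (div_pos (by linarith) habs)
      · intro t ht htε i
        have hDz : (D *ᵥ (zbar + t • (D⁻¹ *ᵥ (s • (Pi.single j 1 : Fin m → ℝ))))) i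
            = (D *ᵥ zbar) i + t * (s * (Pi.single j 1 : Fin m → ℝ) i) := by
          rw [Matrix.mulVec_add, Matrix.mulVec_smul, hDd]
          simp [mul_assoc]
        rw [hDz]
        by_cases h : i = j
        · subst h
          simp only [Pi.single_eq_same, mul_one]
          have habs : 0 < |s| := abs_pos.2 hs
          have h1 : t < -(D *ᵥ zbar) i / |s| := lt_of_lt_of_le htε (min_le_left _ _)
          have h2 : t < ((D *ᵥ zbar) i + x₀ i) / |s| := lt_of_lt_of_le htε (min_le_right _ _)
          have h1' : t * |s| < -(D *ᵥ zbar) i := (lt_div_iff₀ habs).mp h1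
          have h2' : t * |s| < (D *ᵥ zbar) i + x₀ i := (lt_div_iff₀ habs).mp h2
          have hb : |t * s| = t * |s| := by rw [abs_mul, abs_of_pos ht]
          have hts : t * s ≤ t * |s| := by
            nlinarith [le_abs_self s, neg_abs_le s]
          have hts' : -(t * |s|) ≤ t * s := by
            nlinarith [le_abs_self s, neg_abs_le s]
          constructor <;> nlinarith
        · simp [Pi.single_apply, h]
          exact hzbar i
    have h1 : 0 ≤ c j := by
      have := hdir _ (hfeas 1 one_ne_zero)
      rwa [hdot, one_mul] at this
    have h2 : 0 ≤ -c j := by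
      have := hdir _ (hfeas (-1) (by norm_num))
      rw [hdot] at this
      linarith
    linarith
  -- linear dependence contradiction
  have hli := Fintype.linearIndependent_iff.mp hLI
    (fun o => o.elim 1 (fun i => -c i.1))
  have hsum : ∑ o : Option {i : Fin m // active i},
      (Option.elim o 1 (fun i => -c i.1)) •
        (Option.elim o w (fun i => fun j => D i.1 j)) = 0 := by
    rw [Fintype.sum_option]
    funext jj
    simp only [Option.elim, Pi.add_apply, Pi.smul_apply, Finset.sum_apply, Pi.zero_apply,
      smul_eq_mul, one_mul]
    have hw' : w jj = ∑ k : Fin m, c k * D k jj := by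
      rw [← hcD]; simp [Matrix.vecMul, dotProduct]
    have hsplit : ∑ k : Fin m, c k * D k jj
        = ∑ k : {i : Fin m // active i}, c k.1 * D k.1 jj := by
      rw [← Finset.sum_subtype (Finset.univ.filter active) (by simp) (fun k => c k * D k jj)]
      rw [← Finset.sum_filter_add_sum_filter_not Finset.univ active (fun k => c k * D k jj)]
      have : ∑ k ∈ Finset.univ.filter (fun k => ¬ active k), c k * D k jj = 0 := by
        apply Finset.sum_eq_zero
        intro k hk
        rw [hczero k (Finset.mem_filter.mp hk).2]
        ring
      rw [this, add_zero]
    rw [hw', hsplit]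
    simp [neg_mul]
  have := hli hsum none
  simp at this
end
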